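/- Let (M,g) be a Riemannian manifold with a smooth function f satisfying the Miao-Tam equation. Then (1/f)(∇|∇f|² - (2Δf/n)∇f) = 2(Ric(∇f) - (R/n)∇f) on the set where f > 0. -/

import Mathlib

open scoped RealInnerProductSpace BigOperators

/-- For a function `f` satisfying the Miao-Tam equation, on the set where `f > 0`,
`(1/f)(∇|∇f|² - (2Δf/n)∇f) = 2(Ric(∇f) - (R/n)∇f)`. -/
theorem miaoTam_gradient_identity
    {M V : Type*} [NormedAddCommGroup V] [InnerProductSpace ℝ V]
    (n : ℕ) (hn : 2 ≤ n) (b : OrthonormalBasis (Fin n) ℝ V)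
    (f : M → ℝ) (R : ℝ)
    (lap : (M → ℝ) → M → ℝ)
    (grad : (M → ℝ) → M → V)
    (Hess : (M → ℝ) → M → V → V → ℝ)
    (Ric : M → V → V → ℝ)
    (RicV : M → V → V)
    (hRicV : ∀ x u v, ⟪RicV x u, v⟫ = Ric x u v)
    (hMT : ∀ x u v, (-(lap f x)) * ⟪u, v⟫ + Hess f x u v - f x * Ric x u v = ⟪u, v⟫)
    (htrHess : ∀ x, ∑ i, Hess f x (b i) (b i) = lap f x)
    (htrRic : ∀ x, ∑ i, Ric x (b i) (b i) = R)
    (hgradnorm : ∀ x u, ⟪grad (fun y => ‖grad f y‖ ^ 2) x, u⟫ = 2 * Hess f x (grad f x) u) :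
    ∀ x, 0 < f x →
      (f x)⁻¹ • (grad (fun y => ‖grad f y‖ ^ 2) x - (2 * lap f x / (n : ℝ)) • grad f x)
        = (2 : ℝ) • (RicV x (grad f x) - (R / (n : ℝ)) • grad f x) := by
  intro x hfx
  have hf0 : f x ≠ 0 := ne_of_gt hfx
  have hn0 : (n : ℝ) ≠ 0 := by positivity
  have hone : ∀ i : Fin n, ⟪b i, b i⟫ = (1 : ℝ) := fun i => by
    rw [real_inner_self_eq_norm_sq, b.orthonormal.1 i]; norm_num
  have htr : -(lap f x) * n + lap f x - f x * R = n := by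
    have h : (∑ i : Fin n, ((-(lap f x)) * ⟪b i, b i⟫ + Hess f x (b i) (b i)
        - f x * Ric x (b i) (b i))) = ∑ i : Fin n, ⟪b i, b i⟫ :=
      Finset.sum_congr rfl fun i _ => hMT x (b i) (b i)
    simp only [Finset.sum_sub_distrib, Finset.sum_add_distrib, ← Finset.mul_sum,
      hone, Finset.sum_const, Finset.card_univ, Fintype.card_fin, nsmul_eq_mul,
      mul_one, htrHess x, htrRic x] at h
    linarith [h]
  apply ext_inner_right ℝ
  intro v
  have hH : Hess f x (grad f x) v
      = ⟪grad f x, v⟫ + lap f x * ⟪grad f x, v⟫ + f x * Ric x (grad f x) v := by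
    linarith [hMT x (grad f x) v]
  rw [real_inner_smul_left, inner_sub_left, hgradnorm, real_inner_smul_left,
    real_inner_smul_left, inner_sub_left, real_inner_smul_left, hRicV, hH]
  field_simp
  linear_combination (-⟪grad f x, v⟫) * htr
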